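/- arXiv:2009.02378 — 2 statements merged into one kernel-verified Lean document; each statement's English description precedes it below -/
import Mathlib

section
/- Let n, m ≥ 1, let a : Fin n → Fin n → ℝ be symmetric (a(i,j) = a(j,i)), let β ∈ ℝ, let x_i : ℝ → ℝ^m (i = 1,…,n) be arbitrary functions, and let G_i : ℝ → ℝ^m (i = 1,…,n) be differentiable functions satisfying, for every t ≥ 0 and every i, the dynamics G_i'(t) = −β · ∑_{j=1}^n a(i,j) · sgn(x_i(t) − x_j(t)) − G_i(t), where sgn acts componentwise. Then for all t ≥ 0, ∑_{i=1}^n G_i(t) = e^{−t} · ∑_{i=1}^n G_i(0); in particular ∑_{i=1}^n G_i(t) → 0 as t → ∞. -/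
open Filter

/-- Core of Lemma 3: if the gradients `G_i` obey the closed-loop dynamics
`G_i' t = -β • ∑ j a i j • sgn (x_i t - x_j t) - G_i t` for `t ≥ 0` with
symmetric weights `a`, then `∑ i, G_i t = e^{-t} • ∑ i, G_i 0` for all `t ≥ 0`,
and in particular `∑ i, G_i t → 0` as `t → ∞`. -/
theorem stmt_6 (n m : ℕ) (hn : 1 ≤ n) (hm : 1 ≤ m)
    (a : Fin n → Fin n → ℝ) (hsym : ∀ i j, a i j = a j i) (β : ℝ)
    (x : Fin n → ℝ → Fin m → ℝ) (G : Fin n → ℝ → Fin m → ℝ)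
    (hGdiff : ∀ i, Differentiable ℝ (G i))
    (hdyn : ∀ i, ∀ t : ℝ, 0 ≤ t →
      deriv (G i) t =
        -β • (∑ j : Fin n, a i j • (fun k : Fin m => Real.sign ((x i t - x j t) k)))
          - G i t) :
    (∀ t : ℝ, 0 ≤ t →
        ∑ i : Fin n, G i t = Real.exp (-t) • ∑ i : Fin n, G i 0) ∧
      Tendsto (fun t : ℝ => ∑ i : Fin n, G i t) atTop (nhds 0) := by
  set S : ℝ → Fin m → ℝ := fun t => ∑ i : Fin n, G i t with hS
  have hSdiff : Differentiable ℝ S := by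
    apply Differentiable.fun_sum
    intro i _
    exact hGdiff i
  -- cancellation of interaction terms
  have hcancel : ∀ t : ℝ,
      (∑ i : Fin n, ∑ j : Fin n,
        a i j • (fun k : Fin m => Real.sign ((x i t - x j t) k))) = 0 := by
    intro t
    set F : Fin n → Fin n → Fin m → ℝ :=
      fun i j => a i j • (fun k : Fin m => Real.sign ((x i t - x j t) k)) with hF
    have hanti : ∀ i j, F j i = -F i j := by
      intro i j
      funext k
      simp only [hF, Pi.smul_apply, Pi.neg_apply, smul_eq_mul]
      rw [hsym j i]
      have : (x j t - x i t) k = -((x i t - x j t) k) := by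
        simp [Pi.sub_apply]
      rw [this, Real.sign_neg]
      ring
    have h1 : (∑ i : Fin n, ∑ j : Fin n, F i j)
        = -(∑ i : Fin n, ∑ j : Fin n, F i j) := by
      calc (∑ i : Fin n, ∑ j : Fin n, F i j)
          = ∑ j : Fin n, ∑ i : Fin n, F i j := Finset.sum_comm
        _ = ∑ j : Fin n, ∑ i : Fin n, -F j i :=
              Finset.sum_congr rfl fun j _ => Finset.sum_congr rfl fun i _ => by
                rw [hanti j i]
        _ = -(∑ j : Fin n, ∑ i : Fin n, F j i) := by
              simp [Finset.sum_neg_distrib]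
    have := add_eq_zero_iff_eq_neg.mpr h1
    have h2 : (2 : ℝ) • (∑ i : Fin n, ∑ j : Fin n, F i j) = 0 := by
      rw [two_smul]; exact add_eq_zero_iff_eq_neg.mpr h1
    have := smul_eq_zero.mp h2
    rcases this with h | h
    · norm_num at h
    · exact h
  have hSderiv : ∀ t : ℝ, 0 ≤ t → deriv S t = -S t := by
    intro t ht
    have : deriv S t = ∑ i : Fin n, deriv (G i) t := by
      rw [hS]
      exact deriv_fun_sum (fun i _ => (hGdiff i).differentiableAt)
    rw [this]
    have : (∑ i : Fin n, deriv (G i) t)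
        = -β • (∑ i : Fin n, ∑ j : Fin n,
            a i j • (fun k : Fin m => Real.sign ((x i t - x j t) k))) - S t := by
      rw [Finset.smul_sum, hS]
      rw [← Finset.sum_sub_distrib]
      exact Finset.sum_congr rfl (fun i _ => hdyn i t ht)
    rw [this, hcancel t, smul_zero, zero_sub]
  -- H t = exp t • S t is constant on [0, ∞)
  have hH : ∀ t : ℝ, 0 ≤ t → Real.exp t • S t = S 0 := by
    intro t ht
    have hder : ∀ s : ℝ, 0 ≤ s →
        HasDerivAt (fun u => Real.exp u • S u) 0 s := by
      intro s hs
      have h1 : HasDerivAt Real.exp (Real.exp s) s := Real.hasDerivAt_exp s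
      have h2 : HasDerivAt S (deriv S s) s := (hSdiff s).hasDerivAt
      have := h1.smul h2
      rw [hSderiv s hs] at this
      convert this using 1
      · rfl
      · rfl
      · rfl
      · rfl
      · simp [smul_smul]
    have := constant_of_has_deriv_right_zero
      (f := fun u => Real.exp u • S u) (a := 0) (b := t)
      (fun s hs => ((hder s hs.1).continuousAt.continuousWithinAt))
      (fun s hs => (hder s hs.1).hasDerivWithinAt)
      t (Set.mem_Icc.mpr ⟨ht, le_refl t⟩)
    simpa using this
  have hmain : ∀ t : ℝ, 0 ≤ t → S t = Real.exp (-t) • S 0 := by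
    intro t ht
    rw [← hH t ht, smul_smul, ← Real.exp_add]
    simp
  refine ⟨hmain, ?_⟩
  have hlim : Tendsto (fun t : ℝ => Real.exp (-t) • S 0) atTop (nhds 0) := by
    have : Tendsto (fun t : ℝ => Real.exp (-t)) atTop (nhds 0) := by
      simpa using Real.tendsto_exp_neg_atTop_nhds_zero
    simpa using this.smul_const (S 0)
  refine Tendsto.congr' ?_ hlim
  filter_upwards [eventually_ge_atTop (0:ℝ)] with t ht
  exact (hmain t ht).symm
end

section
/- Let f : ℝ^m → ℝ and g_1, …, g_q : ℝ^m → ℝ be differentiable convex functions and let ρ > 0. Suppose x̄ ∈ ℝ^m satisfies g_j(x̄) < 1/ρ for all j and the barrier stationarity condition ∇f(x̄) + ∑_{j=1}^q (1/(1 − ρ·g_j(x̄))) · ∇g_j(x̄) = 0. Suppose y* ∈ ℝ^m satisfies g_j(y*) ≤ 0 for all j, and there exist Lagrange multipliers ν_1, …, ν_q ≥ 0 such that f(y*) ≤ f(x) + ∑_{j=1}^q ν_j·g_j(x) for all x ∈ ℝ^m. Then |f(x̄) − f(y*)| ≤ (q + ∑_{j=1}^q ν_j)/ρ. -/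
open InnerProductSpace

/-- A convex function with zero Fréchet derivative at a point attains its minimum there. -/
lemma min_of_fderiv_zero {F : Type*} [NormedAddCommGroup F] [NormedSpace ℝ F]
    {L : F → ℝ} (hc : ConvexOn ℝ Set.univ L) {x : F} (h : HasFDerivAt L (0 : F →L[ℝ] ℝ) x)
    (y : F) : L x ≤ L y := by
  set φ : ℝ → ℝ := fun t => L (x + t • (y - x)) with hφ
  have hline : ∀ t : ℝ, HasDerivAt (fun t : ℝ => x + t • (y - x)) (y - x) t := by
    intro t
    simpa using ((hasDerivAt_id t).smul_const (y - x)).const_add x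
  have hφd : HasDerivAt φ 0 0 := by
    have h' : HasFDerivAt L (0 : F →L[ℝ] ℝ) (x + (0:ℝ) • (y - x)) := by simpa using h
    have := h'.comp_hasDerivAt 0 (hline 0)
    have h0 : HasDerivAt φ ((0 : F →L[ℝ] ℝ) (y - x)) 0 := this
    simpa using h0
  have hφc : ConvexOn ℝ Set.univ φ := by
    refine ⟨convex_univ, ?_⟩
    intro s _ t _ a b ha hb hab
    have key : x + (a * s + b * t) • (y - x)
        = a • (x + s • (y - x)) + b • (x + t • (y - x)) := by
      have hb' : b = 1 - a := by linarith
      subst hb'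
      module
    have := hc.2 (Set.mem_univ (x + s • (y - x))) (Set.mem_univ (x + t • (y - x))) ha hb hab
    simpa [φ, key, smul_eq_mul] using this
  have hslope := hφc.deriv_le_slope (Set.mem_univ (0:ℝ)) (Set.mem_univ (1:ℝ))
    one_pos hφd.differentiableAt
  rw [hφd.deriv] at hslope
  have : φ 0 ≤ φ 1 := by
    have h1 : slope φ 0 1 = φ 1 - φ 0 := by simp [slope_def_field]
    rw [h1] at hslope; linarith
  simpa [φ] using this

/-- Combined value bound from the proof of Theorem 1: if `x̄` is a stationary
point of the log-barrier penalized objective and `y*` is a KKT point of the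
constrained problem (with multipliers `ν_j ≥ 0` giving the Lagrangian
saddle-point property), then `|f x̄ - f y*| ≤ (q + ∑ j ν_j)/ρ`. -/
theorem stmt_9 (m q : ℕ) (f : EuclideanSpace ℝ (Fin m) → ℝ)
    (g : Fin q → EuclideanSpace ℝ (Fin m) → ℝ)
    (hf : Differentiable ℝ f) (hfconv : ConvexOn ℝ Set.univ f)
    (hg : ∀ j, Differentiable ℝ (g j)) (hgconv : ∀ j, ConvexOn ℝ Set.univ (g j))
    (ρ : ℝ) (hρ : 0 < ρ)
    (xbar : EuclideanSpace ℝ (Fin m)) (hxbar : ∀ j, g j xbar < 1 / ρ)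
    (hstat : gradient f xbar +
      ∑ j : Fin q, (1 / (1 - ρ * g j xbar)) • gradient (g j) xbar = 0)
    (ystar : EuclideanSpace ℝ (Fin m)) (hfeas : ∀ j, g j ystar ≤ 0)
    (ν : Fin q → ℝ) (hν : ∀ j, 0 ≤ ν j)
    (hsaddle : ∀ x : EuclideanSpace ℝ (Fin m),
      f ystar ≤ f x + ∑ j : Fin q, ν j * g j x) :
    |f xbar - f ystar| ≤ (q + ∑ j : Fin q, ν j) / ρ := by
  set lam : Fin q → ℝ := fun j => 1 / (1 - ρ * g j xbar) with hlam
  have hden : ∀ j, 0 < 1 - ρ * g j xbar := by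
    intro j
    have h1 : ρ * g j xbar < ρ * (1 / ρ) := mul_lt_mul_of_pos_left (hxbar j) hρ
    rw [mul_one_div, div_self hρ.ne'] at h1
    linarith
  have hlampos : ∀ j, 0 < lam j := fun j => div_pos one_pos (hden j)
  set L : EuclideanSpace ℝ (Fin m) → ℝ := fun x => f x + ∑ j : Fin q, lam j * g j x with hL
  -- convexity of L
  have hLconv : ConvexOn ℝ Set.univ L := by
    refine ⟨convex_univ, ?_⟩
    intro u _ v _ a b ha hb hab
    have hfu := hfconv.2 (Set.mem_univ u) (Set.mem_univ v) ha hb hab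
    have hgu : ∀ j : Fin q, lam j * g j (a • u + b • v)
        ≤ lam j * (a * g j u + b * g j v) := by
      intro j
      exact mul_le_mul_of_nonneg_left
        (by simpa [smul_eq_mul] using
          (hgconv j).2 (Set.mem_univ u) (Set.mem_univ v) ha hb hab)
        (hlampos j).le
    have hsum : ∑ j : Fin q, lam j * g j (a • u + b • v) ≤ ∑ j : Fin q, lam j * (a * g j u + b * g j v) := Finset.sum_le_sum (fun j _ => hgu j)
    simp only [L, smul_eq_mul] at *
    have : f (a • u + b • v) + ∑ j : Fin q, lam j * g j (a • u + b • v)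
        ≤ (a * f u + b * f v) + ∑ j : Fin q, lam j * (a * g j u + b * g j v) := by
      exact add_le_add hfu hsum
    calc f (a • u + b • v) + ∑ j : Fin q, lam j * g j (a • u + b • v)
        ≤ (a * f u + b * f v) + ∑ j : Fin q, lam j * (a * g j u + b * g j v) := this
      _ = a * (f u + ∑ j : Fin q, lam j * g j u)
          + b * (f v + ∑ j : Fin q, lam j * g j v) := by
          have e1 : ∑ j : Fin q, lam j * (a * g j u + b * g j v)
              = a * (∑ j : Fin q, lam j * g j u) + b * (∑ j : Fin q, lam j * g j v) := by
            rw [Finset.mul_sum, Finset.mul_sum, ← Finset.sum_add_distrib]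
            exact Finset.sum_congr rfl (fun j _ => by ring)
          rw [e1]; ring
  -- zero derivative of L at xbar
  have hstat' : fderiv ℝ f xbar + ∑ j : Fin q, lam j • fderiv ℝ (g j) xbar = 0 := by
    have := congrArg (InnerProductSpace.toDual ℝ (EuclideanSpace ℝ (Fin m))) hstat
    simpa [gradient, map_add, map_sum, map_smul, lam] using this
  have hLderiv : HasFDerivAt L (0 : EuclideanSpace ℝ (Fin m) →L[ℝ] ℝ) xbar := by
    have h1 : HasFDerivAt L
        (fderiv ℝ f xbar + ∑ j : Fin q, lam j • fderiv ℝ (g j) xbar) xbar := by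
      exact ((hf xbar).hasFDerivAt).add
        (HasFDerivAt.fun_sum fun j _ => ((hg j xbar).hasFDerivAt).const_mul (lam j))
    rwa [hstat'] at h1
  have hmin : L xbar ≤ L ystar := min_of_fderiv_zero hLconv hLderiv ystar
  -- upper bound: f xbar - f ystar ≤ q / ρ
  have hub : f xbar - f ystar ≤ (q : ℝ) / ρ := by
    have h1 : ∑ j : Fin q, lam j * g j ystar ≤ 0 :=
      Finset.sum_nonpos fun j _ =>
        mul_nonpos_of_nonneg_of_nonpos (hlampos j).le (hfeas j)
    have h2 : ∀ j : Fin q, -(lam j * g j xbar) ≤ 1 / ρ := by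
      intro j
      have hd := hden j
      have : lam j * g j xbar = (lam j - 1) / ρ := by
        rw [hlam]
        field_simp
        ring
      rw [this, ← neg_div, neg_sub]
      gcongr
      linarith [hlampos j]
    have h3 : -∑ j : Fin q, lam j * g j xbar ≤ (q : ℝ) / ρ := by
      rw [← Finset.sum_neg_distrib]
      calc ∑ j : Fin q, -(lam j * g j xbar) ≤ ∑ _j : Fin q, 1 / ρ :=
            Finset.sum_le_sum fun j _ => h2 j
        _ = (q : ℝ) / ρ := by simp [Finset.sum_div]; ring
    have : f xbar + ∑ j : Fin q, lam j * g j xbar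
        ≤ f ystar + ∑ j : Fin q, lam j * g j ystar := hmin
    linarith
  -- lower bound: f ystar - f xbar ≤ (∑ ν) / ρ
  have hlb : f ystar - f xbar ≤ (∑ j : Fin q, ν j) / ρ := by
    have h1 := hsaddle xbar
    have h2 : ∑ j : Fin q, ν j * g j xbar ≤ (∑ j : Fin q, ν j) / ρ := by
      rw [Finset.sum_div]
      refine Finset.sum_le_sum fun j _ => ?_
      have := (hxbar j).le
      calc ν j * g j xbar ≤ ν j * (1 / ρ) :=
            mul_le_mul_of_nonneg_left this (hν j)
        _ = ν j / ρ := by ring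
    linarith
  have hq : (0:ℝ) ≤ (q : ℝ) := Nat.cast_nonneg q
  have hν' : (0:ℝ) ≤ ∑ j : Fin q, ν j := Finset.sum_nonneg fun j _ => hν j
  rw [abs_sub_le_iff]
  constructor
  · calc f xbar - f ystar ≤ (q : ℝ) / ρ := hub
      _ ≤ ((q : ℝ) + ∑ j : Fin q, ν j) / ρ := by gcongr; linarith
  · calc f ystar - f xbar ≤ (∑ j : Fin q, ν j) / ρ := hlb
      _ ≤ ((q : ℝ) + ∑ j : Fin q, ν j) / ρ := by gcongr; linarith
end
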